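/- Let ζ generate F_q^*, and for a monic irreducible polynomial φ over F_q with φ(0) ≠ 0 let r(φ) ∈ ℤ/(q-1) satisfy ζ^{r(φ)} = (-1)^{deg φ} φ(0). Let ω be a (q-1)-st root of unity in ℂ with ω ≠ 1. Then the formal power series ∏_φ (1 + ω^{r(φ)} u^{deg φ}) (product over monic irreducibles φ with φ(0) ≠ 0) equals 1 if ω ≠ -1, and equals (1 - qu^2)/(1 - u^2) if ω = -1. -/

import Mathlib

open PowerSeries

namespace BritnellAux

open scoped Classical

variable {F : Type*} [Field F] [Fintype F]

/-- discrete log w.r.t. ζ -/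
noncomputable def dl (ζ x : F) : ℕ := if h : ∃ k : ℕ, ζ ^ k = x then h.choose else 0

lemma dl_spec {ζ x : F} (h : ∃ k : ℕ, ζ ^ k = x) : ζ ^ dl ζ x = x := by
  rw [dl, dif_pos h]; exact h.choose_spec

/-- character defined by ζ ↦ ε -/
noncomputable def chi (ζ : F) (ε : ℂ) (x : F) : ℂ := if x = 0 then 0 else ε ^ dl ζ x

section chi

variable {ζ : F} {ε : ℂ} (hζ : ∀ x : F, x ≠ 0 → ∃ k : ℕ, ζ ^ k = x)
  (hkey : ∀ a b : ℕ, ζ ^ a = ζ ^ b → ε ^ a = ε ^ b)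

lemma chi_zero : chi ζ ε 0 = 0 := by rw [chi, if_pos rfl]

include hζ hkey in
lemma chi_pow_eq (hζ0 : ζ ≠ 0) (k : ℕ) : chi ζ ε (ζ ^ k) = ε ^ k := by
  rw [chi, if_neg (pow_ne_zero _ hζ0)]
  exact hkey _ _ (dl_spec (hζ _ (pow_ne_zero _ hζ0)))

include hζ hkey in
lemma chi_mul {x y : F} (hx : x ≠ 0) (hy : y ≠ 0) :
    chi ζ ε (x * y) = chi ζ ε x * chi ζ ε y := by
  rw [chi, chi, chi, if_neg hx, if_neg hy, if_neg (mul_ne_zero hx hy), ← pow_add]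
  refine hkey _ _ ?_
  rw [pow_add, dl_spec (hζ _ (mul_ne_zero hx hy)), dl_spec (hζ _ hx), dl_spec (hζ _ hy)]

include hζ hkey in
lemma chi_one' : chi ζ ε 1 = 1 := by
  rw [chi, if_neg one_ne_zero]
  have := hkey (dl ζ 1) 0 (by rw [dl_spec (hζ 1 one_ne_zero), pow_zero])
  simpa using this

include hζ hkey in
lemma chi_pow' {x : F} (hx : x ≠ 0) (k : ℕ) : chi ζ ε (x ^ k) = chi ζ ε x ^ k := by
  induction k with
  | zero => simpa using chi_one' hζ hkey
  | succ k ih => rw [pow_succ, pow_succ, chi_mul hζ hkey (pow_ne_zero _ hx) hx, ih]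

include hζ hkey in
lemma chi_sum_zero (hζ0 : ζ ≠ 0) (hε1 : ε ≠ 1) : ∑ a : F, chi ζ ε a = 0 := by
  have hepz : chi ζ ε ζ = ε := by simpa using chi_pow_eq hζ hkey hζ0 1
  have h : ε * ∑ a : F, chi ζ ε a = ∑ a : F, chi ζ ε a := by
    rw [Finset.mul_sum]
    rw [← Fintype.sum_bijective (fun a => ζ * a) (Equiv.mulLeft₀ ζ hζ0).bijective
      (fun a => chi ζ ε (ζ * a)) _ (fun a => rfl)]
    refine Finset.sum_congr rfl fun a _ => ?_
    rcases eq_or_ne a 0 with rfl | ha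
    · simp [chi_zero]
    · rw [chi_mul hζ hkey hζ0 ha, hepz]
  have h2 : (ε - 1) * ∑ a : F, chi ζ ε a = 0 := by rw [sub_mul, one_mul, h, sub_self]
  rcases mul_eq_zero.mp h2 with h1 | h1
  · exact absurd (sub_eq_zero.mp h1) hε1
  · exact h1

lemma chi_sum_one (hζ0 : ζ ≠ 0) : ∑ a : F, chi ζ (1 : ℂ) a = (Fintype.card F : ℂ) - 1 := by
  have h : ∀ a : F, chi ζ (1:ℂ) a = if a = 0 then 0 else 1 := by
    intro a; rw [chi]; split <;> simp
  rw [Finset.sum_congr rfl fun a _ => h a]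
  simp only [Finset.sum_ite, Finset.sum_const_zero, Finset.sum_const, zero_add, nsmul_eq_mul,
    mul_one]
  have : Finset.filter (fun a : F => ¬ a = 0) Finset.univ = Finset.univ.erase 0 := by
    ext a; simp [Finset.mem_erase, and_comm]
  rw [this, Finset.card_erase_of_mem (Finset.mem_univ _)]
  rw [Finset.card_univ, Nat.cast_sub Fintype.card_pos, Nat.cast_one]

end chi

section poly

variable (ζ : F) (ε : ℂ)

/-- character of a polynomial: `χ((-1)^deg f · f(0))`. -/
noncomputable def cpol (f : Polynomial F) : ℂ :=
  chi ζ ε ((-1) ^ f.natDegree * f.coeff 0)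

lemma finite_natDegree_le (m : ℕ) : {p : Polynomial F | p.natDegree ≤ m}.Finite := by
  apply Set.Finite.subset
    (Set.finite_range fun v : Fin (m+1) → F => ∑ i : Fin (m+1), Polynomial.C (v i) * Polynomial.X ^ (i : ℕ))
  intro p hp
  refine ⟨fun i => p.coeff i, ?_⟩
  conv_rhs => rw [p.as_sum_range' (m+1) (Nat.lt_succ_of_le hp)]
  show ∑ i : Fin (m+1), Polynomial.C (p.coeff (i : ℕ)) * Polynomial.X ^ (i : ℕ) = _
  rw [Fin.sum_univ_eq_sum_range fun i => Polynomial.C (p.coeff i) * Polynomial.X ^ i]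
  exact Finset.sum_congr rfl fun i _ => Polynomial.C_mul_X_pow_eq_monomial

/-- the finset of monic polynomials of degree `m` with nonzero constant coefficient -/
noncomputable def Mfin (m : ℕ) : Finset (Polynomial F) :=
  ((finite_natDegree_le (F := F) m).subset
    (fun p (hp : p ∈ {p : Polynomial F | p.Monic ∧ p.natDegree = m ∧ p.coeff 0 ≠ 0}) =>
      le_of_eq hp.2.1)).toFinset

lemma mem_Mfin {m : ℕ} {p : Polynomial F} :
    p ∈ Mfin (F := F) m ↔ p.Monic ∧ p.natDegree = m ∧ p.coeff 0 ≠ 0 := by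
  simp [Mfin]

/-- the finset of monic irreducible polynomials of degree `d` with nonzero constant coeff -/
noncomputable def Sfin (d : ℕ) : Finset (Polynomial F) :=
  ((finite_natDegree_le (F := F) d).subset
    (fun p (hp : p ∈ {p : Polynomial F | p.Monic ∧ Irreducible p ∧ p.natDegree = d ∧
      p.coeff 0 ≠ 0}) => le_of_eq hp.2.2.1)).toFinset

lemma mem_Sfin {d : ℕ} {p : Polynomial F} :
    p ∈ Sfin (F := F) d ↔ p.Monic ∧ Irreducible p ∧ p.natDegree = d ∧ p.coeff 0 ≠ 0 := by
  simp [Sfin]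

lemma coe_Sfin (d : ℕ) : (Sfin (F := F) d : Set (Polynomial F)) =
    {p : Polynomial F | p.Monic ∧ Irreducible p ∧ p.natDegree = d ∧ p.coeff 0 ≠ 0} := by
  ext p; simp [mem_Sfin]

end poly

section cpol

variable {ζ : F} {ε : ℂ} (hζ : ∀ x : F, x ≠ 0 → ∃ k : ℕ, ζ ^ k = x)
  (hkey : ∀ a b : ℕ, ζ ^ a = ζ ^ b → ε ^ a = ε ^ b)

include hζ hkey

lemma cpol_one : cpol ζ ε (1 : Polynomial F) = 1 := by
  simp only [cpol, Polynomial.natDegree_one, pow_zero, Polynomial.coeff_one_zero, one_mul]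
  exact chi_one' hζ hkey

lemma cpol_mul {f g : Polynomial F} (hf : f.Monic) (hg : g.Monic)
    (hf0 : f.coeff 0 ≠ 0) (hg0 : g.coeff 0 ≠ 0) :
    cpol ζ ε (f * g) = cpol ζ ε f * cpol ζ ε g := by
  have hfz := hf.ne_zero
  have hgz := hg.ne_zero
  rw [cpol, cpol, cpol, Polynomial.natDegree_mul hfz hgz, Polynomial.mul_coeff_zero]
  rw [show (-1 : F) ^ (f.natDegree + g.natDegree) * (f.coeff 0 * g.coeff 0)
    = ((-1) ^ f.natDegree * f.coeff 0) * ((-1) ^ g.natDegree * g.coeff 0) by ring]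
  exact chi_mul hζ hkey (mul_ne_zero (pow_ne_zero _ (neg_ne_zero.mpr one_ne_zero)) hf0)
    (mul_ne_zero (pow_ne_zero _ (neg_ne_zero.mpr one_ne_zero)) hg0)

lemma cpol_prod {ι : Type*} (s : Finset ι) (g : ι → Polynomial F)
    (h : ∀ i ∈ s, (g i).Monic ∧ (g i).coeff 0 ≠ 0) :
    cpol ζ ε (∏ i ∈ s, g i) = ∏ i ∈ s, cpol ζ ε (g i) := by
  classical
  induction s using Finset.induction_on with
  | empty => simpa using cpol_one hζ hkey
  | @insert a s' hx ih =>
    have hprod : (∏ i ∈ s', g i).Monic :=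
      Polynomial.monic_prod_of_monic _ _ fun i hi => (h i (Finset.mem_insert_of_mem hi)).1
    have hprod0 : (∏ i ∈ s', g i).coeff 0 ≠ 0 := by
      rw [show ((∏ i ∈ s', g i).coeff 0) = Polynomial.constantCoeff (∏ i ∈ s', g i) from rfl,
        map_prod]
      exact Finset.prod_ne_zero_iff.mpr fun i hi => (h i (Finset.mem_insert_of_mem hi)).2
    rw [Finset.prod_insert hx, Finset.prod_insert hx,
      cpol_mul hζ hkey (h a (Finset.mem_insert_self a s')).1 hprod
        (h a (Finset.mem_insert_self a s')).2 hprod0,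
      ih fun i hi => h i (Finset.mem_insert_of_mem hi)]

lemma cpol_pow {f : Polynomial F} (hf : f.Monic) (hf0 : f.coeff 0 ≠ 0) (k : ℕ) :
    cpol ζ ε (f ^ k) = cpol ζ ε f ^ k := by
  induction k with
  | zero => simpa using cpol_one hζ hkey
  | succ k ih =>
    rw [pow_succ, pow_succ, cpol_mul hζ hkey (hf.pow k) hf ?_ hf0, ih]
    rw [show ((f ^ k).coeff 0) = Polynomial.constantCoeff (f ^ k) from rfl, map_pow]
    exact pow_ne_zero _ hf0

end cpol

section count

variable {ζ : F} {ε : ℂ} (hζ : ∀ x : F, x ≠ 0 → ∃ k : ℕ, ζ ^ k = x)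
  (hkey : ∀ a b : ℕ, ζ ^ a = ζ ^ b → ε ^ a = ε ^ b)

/-- the polynomial `X^m + ∑ v_i X^i` -/
noncomputable def EP (m : ℕ) (v : Fin m → F) : Polynomial F :=
  Polynomial.X ^ m + ∑ i : Fin m, Polynomial.C (v i) * Polynomial.X ^ (i : ℕ)

lemma EP_degree_lt (m : ℕ) (v : Fin m → F) :
    (∑ i : Fin m, Polynomial.C (v i) * Polynomial.X ^ (i : ℕ)).degree < (m : WithBot ℕ) := by
  apply lt_of_le_of_lt (Polynomial.degree_sum_le _ _)
  rw [Finset.sup_lt_iff (by exact_mod_cast WithBot.bot_lt_coe m)]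
  intro i _
  exact lt_of_le_of_lt (Polynomial.degree_C_mul_X_pow_le _ _) (by exact_mod_cast i.2)

lemma EP_monic (m : ℕ) (v : Fin m → F) : (EP m v).Monic :=
  Polynomial.monic_X_pow_add (EP_degree_lt m v)

lemma EP_natDegree (m : ℕ) (v : Fin m → F) : (EP m v).natDegree = m := by
  have h : (EP m v).degree = m := by
    rw [EP, Polynomial.degree_add_eq_left_of_degree_lt
      (by rw [Polynomial.degree_X_pow]; exact EP_degree_lt m v), Polynomial.degree_X_pow]
  exact Polynomial.natDegree_eq_of_degree_eq_some h

lemma EP_coeff_lt (m : ℕ) (v : Fin m → F) {j : ℕ} (hj : j < m) :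
    (EP m v).coeff j = v ⟨j, hj⟩ := by
  rw [EP, Polynomial.coeff_add, Polynomial.coeff_X_pow, if_neg (Nat.ne_of_lt hj),
    Polynomial.finset_sum_coeff]
  rw [Finset.sum_congr rfl fun i _ => by
    rw [Polynomial.coeff_C_mul, Polynomial.coeff_X_pow]]
  rw [Finset.sum_eq_single (⟨j, hj⟩ : Fin m)]
  · simp
  · intro i _ hne
    rw [if_neg, mul_zero]
    exact fun h => hne (Fin.ext h.symm)
  · simp

lemma EP_coeff_self (m : ℕ) (v : Fin m → F) : (EP m v).coeff m = 1 := by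
  have := (EP_monic m v).coeff_natDegree
  rwa [EP_natDegree m v] at this

lemma EP_eq_of_mem {m : ℕ} {f : Polynomial F} (hf : f ∈ Mfin (F := F) m) :
    EP m (fun i => f.coeff i) = f := by
  obtain ⟨hmon, hdeg, -⟩ := mem_Mfin.mp hf
  ext j
  rcases lt_trichotomy j m with hj | rfl | hj
  · rw [EP_coeff_lt m _ hj]
  · rw [EP_coeff_self, ← hdeg, hmon.coeff_natDegree]
  · rw [Polynomial.coeff_eq_zero_of_natDegree_lt (by rw [EP_natDegree]; exact hj),
      Polynomial.coeff_eq_zero_of_natDegree_lt (by rw [hdeg]; exact hj)]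

lemma sum_chi_coeff {m : ℕ} (hm : 1 ≤ m) (g : F → ℂ) (hg0 : g 0 = 0) :
    ∑ f ∈ Mfin (F := F) m, g (f.coeff 0) =
      (Fintype.card F : ℂ) ^ (m - 1) * ∑ a : F, g a := by
  classical
  obtain ⟨k, rfl⟩ : ∃ k, m = k + 1 := ⟨m - 1, (Nat.succ_pred_eq_of_pos hm).symm⟩
  have key : ∑ f ∈ Mfin (F := F) (k+1), g (f.coeff 0) =
      ∑ v ∈ Finset.univ.filter (fun v : Fin (k+1) → F => v 0 ≠ 0), g (v 0) := by
    refine Finset.sum_nbij' (fun f => fun i => f.coeff i) (fun v => EP (k+1) v) ?_ ?_ ?_ ?_ ?_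
    · intro f hf
      obtain ⟨hmon, hdeg, h0⟩ := mem_Mfin.mp hf
      simp only [Finset.mem_filter, Finset.mem_univ, true_and]
      exact h0
    · intro v hv
      rw [mem_Mfin]
      refine ⟨EP_monic _ _, EP_natDegree _ _, ?_⟩
      rw [EP_coeff_lt _ _ (Nat.succ_pos k)]
      simpa using (Finset.mem_filter.mp hv).2
    · intro f hf; exact EP_eq_of_mem hf
    · intro v hv
      funext i
      show (EP (k+1) v).coeff i = v i
      rw [EP_coeff_lt _ _ i.isLt]
    · intro f hf; rfl
  rw [key, Finset.sum_filter_of_ne (fun v _ hne => by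
    intro h0; exact hne (by rw [h0, hg0]))]
  rw [show (∑ v : Fin (k+1) → F, g (v 0)) = ∑ p : F × (Fin k → F), g p.1 from
    Fintype.sum_equiv (Fin.consEquiv fun _ => F).symm _ _ (fun v => rfl)]
  rw [Fintype.sum_prod_type]
  simp only [Finset.sum_const, nsmul_eq_mul]
  rw [← Finset.mul_sum]
  congr 1
  rw [Finset.card_univ]
  simp

include hζ hkey in
lemma sum_cpol_eq (hζ0 : ζ ≠ 0) {m : ℕ} (hm : 1 ≤ m) :
    ∑ f ∈ Mfin (F := F) m, cpol ζ ε f =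
      chi ζ ε (-1) ^ m * ((Fintype.card F : ℂ) ^ (m - 1) * ∑ a : F, chi ζ ε a) := by
  have h1 : ∀ f ∈ Mfin (F := F) m, cpol ζ ε f = chi ζ ε (-1) ^ m * chi ζ ε (f.coeff 0) := by
    intro f hf
    obtain ⟨hmon, hdeg, h0⟩ := mem_Mfin.mp hf
    rw [cpol, hdeg, chi_mul hζ hkey (pow_ne_zero _ (neg_ne_zero.mpr one_ne_zero)) h0,
      chi_pow' hζ hkey (neg_ne_zero.mpr one_ne_zero)]
  rw [Finset.sum_congr rfl h1, ← Finset.mul_sum]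
  congr 1
  exact sum_chi_coeff hm (chi ζ ε) chi_zero

end count

section factors

open UniqueFactorizationMonoid

/-- all monic irreducibles with degree in `[1, N]` and nonzero constant coefficient -/
noncomputable def Ifin (N : ℕ) : Finset (Polynomial F) :=
  (Finset.Icc 1 N).biUnion (fun d => Sfin d)

lemma mem_Ifin {N : ℕ} {p : Polynomial F} :
    p ∈ Ifin (F := F) N ↔ p.Monic ∧ Irreducible p ∧ 1 ≤ p.natDegree ∧ p.natDegree ≤ N ∧
      p.coeff 0 ≠ 0 := by
  simp only [Ifin, Finset.mem_biUnion, Finset.mem_Icc, mem_Sfin]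
  constructor
  · rintro ⟨d, ⟨h1, h2⟩, hm, hi, rfl, h0⟩
    exact ⟨hm, hi, h1, h2, h0⟩
  · rintro ⟨hm, hi, h1, h2, h0⟩
    exact ⟨p.natDegree, ⟨h1, h2⟩, hm, hi, rfl, h0⟩

lemma mem_Ifin_of_factor {N m : ℕ} {f φ : Polynomial F} (hf : f ∈ Mfin (F := F) m)
    (hm : m ≤ N) (hφ : φ ∈ normalizedFactors f) : φ ∈ Ifin (F := F) N := by
  obtain ⟨hmon, hdeg, h0⟩ := mem_Mfin.mp hf
  have hfz : f ≠ 0 := hmon.ne_zero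
  have hirr : Irreducible φ := irreducible_of_normalized_factor φ hφ
  have hφz : φ ≠ 0 := hirr.ne_zero
  have hφm : φ.Monic := by
    have := Polynomial.monic_normalize (R := F) hφz
    rwa [normalize_normalized_factor φ hφ] at this
  have hdvd : φ ∣ f := dvd_of_mem_normalizedFactors hφ
  have hφ0 : φ.coeff 0 ≠ 0 := by
    intro h
    obtain ⟨c, rfl⟩ := hdvd
    rw [Polynomial.mul_coeff_zero, h, zero_mul] at h0
    exact h0 rfl
  have hd1 : 1 ≤ φ.natDegree := by
    rcases Nat.eq_zero_or_pos φ.natDegree with h | h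
    · exact absurd (hφm.natDegree_eq_zero.mp h ▸ hirr) (by simp [not_irreducible_one])
    · exact h
  have hdN : φ.natDegree ≤ N :=
    le_trans (hdeg ▸ Polynomial.natDegree_le_of_dvd hdvd hfz) hm
  exact mem_Ifin.mpr ⟨hφm, hirr, hd1, hdN, hφ0⟩

lemma nf_prod_eq {f : Polynomial F} (hf : f.Monic) : (normalizedFactors f).prod = f := by
  have h1 := prod_normalizedFactors hf.ne_zero
  refine Polynomial.eq_of_monic_of_associated ?_ hf h1
  have h2 : ((normalizedFactors f).map id).prod.Monic := by
    refine Polynomial.monic_multiset_prod_of_monic _ _ fun φ hφ => ?_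
    have := Polynomial.monic_normalize (R := F)
      (irreducible_of_normalized_factor φ hφ).ne_zero
    rw [normalize_normalized_factor φ hφ] at this
    exact this
  rwa [Multiset.map_id] at h2

lemma natDegree_eq_sum_count {N m : ℕ} {f : Polynomial F} (hf : f ∈ Mfin (F := F) m)
    (hm : m ≤ N) :
    m = ∑ φ ∈ Ifin (F := F) N, (normalizedFactors f).count φ * φ.natDegree := by
  classical
  obtain ⟨hmon, hdeg, h0⟩ := mem_Mfin.mp hf
  have h1 : f.natDegree = ((normalizedFactors f).map Polynomial.natDegree).sum := by
    conv_lhs => rw [← nf_prod_eq hmon]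
    exact Polynomial.natDegree_multiset_prod_of_monic _ (fun φ hφ => by
      have := Polynomial.monic_normalize (R := F)
        (irreducible_of_normalized_factor φ hφ).ne_zero
      rwa [normalize_normalized_factor φ hφ] at this)
  rw [← hdeg, h1, Finset.sum_multiset_map_count]
  simp only [smul_eq_mul]
  refine Finset.sum_subset (fun φ hφ => mem_Ifin_of_factor hf hm (Multiset.mem_toFinset.mp hφ))
    (fun φ _ hφ => ?_)
  rw [Multiset.count_eq_zero_of_notMem (fun h => hφ (Multiset.mem_toFinset.mpr h)), zero_mul]

lemma prod_pow_monic (s : Finset (Polynomial F))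
    (h : ∀ φ ∈ s, φ.Monic) (e : Polynomial F → ℕ) : (∏ φ ∈ s, φ ^ e φ).Monic :=
  Polynomial.monic_prod_of_monic _ _ fun φ hφ => (h φ hφ).pow _

lemma nf_prod_pow (s : Finset (Polynomial F))
    (h : ∀ φ ∈ s, φ.Monic ∧ Irreducible φ) (e : Polynomial F → ℕ) :
    normalizedFactors (∏ φ ∈ s, φ ^ e φ) = ∑ φ ∈ s, e φ • ({φ} : Multiset (Polynomial F)) := by
  classical
  induction s using Finset.induction_on with
  | empty => simp [normalizedFactors_one]
  | @insert a s ha ih =>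
    have hmem := h a (Finset.mem_insert_self a s)
    have hrest : ∀ φ ∈ s, φ.Monic ∧ Irreducible φ :=
      fun φ hφ => h φ (Finset.mem_insert_of_mem hφ)
    rw [Finset.prod_insert ha, Finset.sum_insert ha,
      normalizedFactors_mul (pow_ne_zero _ hmem.1.ne_zero)
        (prod_pow_monic s (fun φ hφ => (hrest φ hφ).1) e).ne_zero,
      normalizedFactors_pow, normalizedFactors_irreducible hmem.2,
      hmem.1.normalize_eq_self, ih hrest]

lemma count_sum_smul (s : Finset (Polynomial F)) (e : Polynomial F → ℕ) (ψ : Polynomial F) :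
    Multiset.count ψ (∑ φ ∈ s, e φ • ({φ} : Multiset (Polynomial F))) =
      if ψ ∈ s then e ψ else 0 := by
  classical
  induction s using Finset.induction_on with
  | empty => simp
  | @insert a s ha ih =>
    rw [Finset.sum_insert ha, Multiset.count_add, ih]
    rcases eq_or_ne ψ a with rfl | hne
    · simp [ha, Multiset.count_nsmul]
    · simp [hne, Multiset.count_nsmul, Multiset.count_singleton, Finset.mem_insert]

end factors

section series

open Finset

local notation "X'" => (PowerSeries.X : PowerSeries ℂ)

lemma coeff_eq_of_dvd {K : ℕ} {f g : PowerSeries ℂ} (h : (X : PowerSeries ℂ)^K ∣ f - g)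
    {m : ℕ} (hm : m < K) : coeff m f = coeff m g := by
  have := (PowerSeries.X_pow_dvd_iff.mp h) m hm
  rw [map_sub, sub_eq_zero] at this
  exact this

lemma dvd_sub_one_prod {ι : Type*} (s : Finset ι) (f : ι → PowerSeries ℂ) (K : ℕ)
    (h : ∀ i ∈ s, (X : PowerSeries ℂ)^K ∣ f i - 1) :
    (X : PowerSeries ℂ)^K ∣ (∏ i ∈ s, f i) - 1 := by
  classical
  induction s using Finset.induction_on with
  | empty => simp
  | @insert a s ha ih =>
    rw [Finset.prod_insert ha]
    have h1 := h a (Finset.mem_insert_self a s)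
    have h2 := ih fun i hi => h i (Finset.mem_insert_of_mem hi)
    have : f a * ∏ i ∈ s, f i - 1 = f a * ((∏ i ∈ s, f i) - 1) + (f a - 1) := by ring
    rw [this]
    exact dvd_add (Dvd.dvd.mul_left h2 _) h1

/-- truncated geometric series -/
noncomputable def geom (a : ℂ) (e N : ℕ) : PowerSeries ℂ :=
  ∑ k ∈ Finset.range (N+1), (C a * X'^e)^k

lemma geom_mul_dvd (a : ℂ) {e : ℕ} (he : 1 ≤ e) (N : ℕ) :
    (X : PowerSeries ℂ)^(N+1) ∣ (1 - C a * X'^e) * geom a e N - 1 := by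
  have h : (1 - C a * X'^e) * geom a e N = 1 - (C a * X'^e)^(N+1) := by
    have := geom_sum_mul (C a * X'^e) (N+1)
    rw [geom]
    have h2 : (1 - C a * X' ^ e) * ∑ k ∈ Finset.range (N + 1), (C a * X' ^ e) ^ k
        = -((∑ k ∈ Finset.range (N + 1), (C a * X' ^ e) ^ k) * (C a * X'^e - 1)) := by ring
    rw [h2, this]
    ring
  rw [h]
  have : (1 : PowerSeries ℂ) - (C a * X'^e)^(N+1) - 1 = -((C a)^(N+1) * X'^(e*(N+1))) := by
    rw [mul_pow, ← pow_mul]; ring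
  rw [this]
  exact (Dvd.dvd.mul_left (pow_dvd_pow _ (Nat.le_mul_of_pos_left _ he)) _).neg_right

lemma coeff_geom (a : ℂ) {e : ℕ} (he : 1 ≤ e) (N : ℕ) {j : ℕ} (hj : j ≤ N) :
    coeff j (geom a e N) = if e ∣ j then a^(j/e) else 0 := by
  rw [geom, map_sum]
  have hterm : ∀ k, coeff j ((C a * X'^e)^k) = if j = e * k then a^k else 0 := by
    intro k
    rw [mul_pow, ← map_pow, ← pow_mul, PowerSeries.coeff_C_mul, PowerSeries.coeff_X_pow]
    split <;> simp
  rw [Finset.sum_congr rfl fun k _ => hterm k]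
  by_cases hd : e ∣ j
  · rw [if_pos hd]
    rw [Finset.sum_eq_single (j / e)]
    · rw [if_pos (Nat.eq_mul_of_div_eq_right hd rfl)]
    · intro k _ hk
      rw [if_neg]
      intro hjek
      exact hk (by rw [hjek, Nat.mul_div_cancel_left _ (Nat.lt_of_lt_of_le Nat.zero_lt_one he)])
    · intro hmem
      exact absurd (Finset.mem_range.mpr (Nat.lt_succ_of_le
        (le_trans (Nat.div_le_self j e) hj))) hmem
  · rw [if_neg hd]
    apply Finset.sum_eq_zero
    intro k _
    rw [if_neg]
    intro hjek
    exact hd ⟨k, hjek⟩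

end series

lemma pcoeff_zero_pow (f : Polynomial F) (k : ℕ) : (f ^ k).coeff 0 = f.coeff 0 ^ k := by
  induction k with
  | zero => simp
  | succ k ih => rw [pow_succ, pow_succ, Polynomial.mul_coeff_zero, ih]

lemma pcoeff_zero_prod {ι : Type*} (s : Finset ι) (g : ι → Polynomial F) :
    (∏ i ∈ s, g i).coeff 0 = ∏ i ∈ s, (g i).coeff 0 := by
  classical
  induction s using Finset.induction_on with
  | empty => simp
  | @insert a s ha ih => rw [Finset.prod_insert ha, Finset.prod_insert ha,
      Polynomial.mul_coeff_zero, ih]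

section euler

open Finset UniqueFactorizationMonoid

local notation "X'" => (PowerSeries.X : PowerSeries ℂ)

/-- the truncated zeta-type series -/
noncomputable def Zser (ζ : F) (ε : ℂ) (s : ℕ) : PowerSeries ℂ :=
  PowerSeries.mk fun j => if s ∣ j then ∑ f ∈ Mfin (F := F) (j / s), cpol ζ ε f else 0

variable {ζ : F} {ε : ℂ} (hζ : ∀ x : F, x ≠ 0 → ∃ k : ℕ, ζ ^ k = x)
  (hkey : ∀ a b : ℕ, ζ ^ a = ζ ^ b → ε ^ a = ε ^ b)

include hζ hkey in
set_option maxHeartbeats 1000000 in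
lemma euler (s N : ℕ) (hs : 1 ≤ s) :
    X'^(N+1) ∣ (∏ d ∈ Finset.Icc 1 N, ∏ φ ∈ Sfin (F := F) d,
      (1 - C (cpol ζ ε φ) * X'^(s*d))) * Zser (F := F) ζ ε s - 1 := by
  classical
  have hs0 : 0 < s := hs
  have hIfacts : ∀ φ ∈ Ifin (F := F) N, φ.Monic ∧ Irreducible φ ∧ φ.coeff 0 ≠ 0 ∧
      1 ≤ φ.natDegree := by
    intro φ hφ
    obtain ⟨h1, h2, h3, h4, h5⟩ := mem_Ifin.mp hφ
    exact ⟨h1, h2, h5, h3⟩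
  have hdeg1 : ∀ φ ∈ Ifin (F := F) N, 1 ≤ s * φ.natDegree := fun φ hφ =>
    Nat.one_le_iff_ne_zero.mpr (Nat.mul_ne_zero (by omega)
      (Nat.one_le_iff_ne_zero.mp (hIfacts φ hφ).2.2.2))
  have hdisj : (↑(Finset.Icc 1 N) : Set ℕ).PairwiseDisjoint (fun d => Sfin (F := F) d) := by
    intro d1 _ d2 _ hne
    refine Finset.disjoint_left.mpr fun p h1 h2 => hne ?_
    rw [← (mem_Sfin.mp h1).2.2.1, (mem_Sfin.mp h2).2.2.1]
  have hA : (∏ d ∈ Finset.Icc 1 N, ∏ φ ∈ Sfin (F := F) d,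
      (1 - C (cpol ζ ε φ) * X'^(s*d)))
      = ∏ φ ∈ Ifin (F := F) N, (1 - C (cpol ζ ε φ) * X'^(s*φ.natDegree)) := by
    rw [Ifin, Finset.prod_biUnion hdisj]
    exact Finset.prod_congr rfl fun d _ => Finset.prod_congr rfl fun φ hφ => by
      rw [(mem_Sfin.mp hφ).2.2.1]
  rw [hA]
  set A := ∏ φ ∈ Ifin (F := F) N, (1 - C (cpol ζ ε φ) * X'^(s*φ.natDegree)) with hAdef
  set G := ∏ φ ∈ Ifin (F := F) N, geom (cpol ζ ε φ) (s*φ.natDegree) N with hGdef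
  have hAG : X'^(N+1) ∣ A * G - 1 := by
    rw [hAdef, hGdef, ← Finset.prod_mul_distrib]
    exact dvd_sub_one_prod _ _ _ fun φ hφ => geom_mul_dvd _ (hdeg1 φ hφ) N
  have hGZ : X'^(N+1) ∣ G - Zser (F := F) ζ ε s := by
    rw [PowerSeries.X_pow_dvd_iff]
    intro m hm
    have hmN : m ≤ N := Nat.lt_succ_iff.mp hm
    rw [map_sub, sub_eq_zero, hGdef, PowerSeries.coeff_prod]
    have hle : ∀ ℓ ∈ finsuppAntidiag (Ifin (F := F) N) m, ∀ φ ∈ Ifin (F := F) N,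
        ℓ φ ≤ m := by
      intro ℓ hℓ φ hφ
      obtain ⟨hsum, -⟩ := mem_finsuppAntidiag.mp hℓ
      calc ℓ φ ≤ ∑ ψ ∈ Ifin (F := F) N, ℓ ψ :=
            Finset.single_le_sum (fun _ _ => Nat.zero_le _) hφ
        _ = m := hsum
    rw [Finset.sum_congr rfl fun ℓ hℓ => Finset.prod_congr rfl fun φ hφ =>
      coeff_geom _ (hdeg1 φ hφ) N (le_trans (hle ℓ hℓ φ hφ) hmN)]
    have hterm : ∀ ℓ ∈ finsuppAntidiag (Ifin (F := F) N) m,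
        (∏ φ ∈ Ifin (F := F) N,
          if s * φ.natDegree ∣ ℓ φ then cpol ζ ε φ ^ (ℓ φ / (s * φ.natDegree)) else 0)
        = if (∀ φ ∈ Ifin (F := F) N, s * φ.natDegree ∣ ℓ φ) then
            ∏ φ ∈ Ifin (F := F) N, cpol ζ ε φ ^ (ℓ φ / (s * φ.natDegree)) else 0 := by
      intro ℓ _
      by_cases hP : ∀ φ ∈ Ifin (F := F) N, s * φ.natDegree ∣ ℓ φ
      · rw [if_pos hP]
        exact Finset.prod_congr rfl fun φ hφ => if_pos (hP φ hφ)
      · rw [if_neg hP]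
        push_neg at hP
        obtain ⟨φ, hφI, hnd⟩ := hP
        exact Finset.prod_eq_zero hφI (if_neg hnd)
    rw [Finset.sum_congr rfl hterm, ← Finset.sum_filter, Zser, PowerSeries.coeff_mk]
    by_cases hsm : s ∣ m
    · obtain ⟨m', rfl⟩ := hsm
      have hm' : m' ≤ N := le_trans (Nat.le_mul_of_pos_left m' hs0) hmN
      rw [if_pos (Dvd.intro m' rfl), Nat.mul_div_cancel_left m' hs0]
      refine Finset.sum_nbij' (fun ℓ => ∏ φ ∈ Ifin (F := F) N, φ ^ (ℓ φ / (s * φ.natDegree)))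
        (fun f => Finsupp.onFinset (Ifin (F := F) N)
          (fun φ => if φ ∈ Ifin (F := F) N then
            s * φ.natDegree * (normalizedFactors f).count φ else 0)
          (fun φ h => by by_contra hc; exact h (if_neg hc))) ?_ ?_ ?_ ?_ ?_
      · -- membership in Mfin m'
        intro ℓ hℓ
        obtain ⟨hmem, hdvd⟩ := Finset.mem_filter.mp hℓ
        obtain ⟨hsum, -⟩ := mem_finsuppAntidiag.mp hmem
        rw [mem_Mfin]
        refine ⟨prod_pow_monic _ (fun φ hφ => (hIfacts φ hφ).1) _, ?_, ?_⟩
        · rw [Polynomial.natDegree_prod _ _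
            (fun φ hφ => pow_ne_zero _ (hIfacts φ hφ).1.ne_zero)]
          rw [Finset.sum_congr rfl fun φ _ => Polynomial.natDegree_pow _ _]
          refine Nat.eq_of_mul_eq_mul_left hs0 ?_
          rw [Finset.mul_sum]
          rw [Finset.sum_congr rfl (fun φ hφ => ?_), hsum]
          obtain ⟨k, hk⟩ := hdvd φ hφ
          rw [hk, Nat.mul_div_cancel_left _ (hdeg1 φ hφ)]
          ring
        · rw [pcoeff_zero_prod]
          refine Finset.prod_ne_zero_iff.mpr fun φ hφ => ?_
          rw [pcoeff_zero_pow]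
          exact pow_ne_zero _ (hIfacts φ hφ).2.2.1
      · -- membership of j f
        intro f hf
        rw [Finset.mem_filter]
        constructor
        · rw [mem_finsuppAntidiag]
          refine ⟨?_, Finsupp.support_onFinset_subset⟩
          show ∑ φ ∈ Ifin (F := F) N, (if φ ∈ Ifin (F := F) N then
            s * φ.natDegree * (normalizedFactors f).count φ else 0) = s * m'
          rw [Finset.sum_congr rfl fun φ hφ => show (if φ ∈ Ifin (F := F) N then
              s * φ.natDegree * (normalizedFactors f).count φ else 0) = _ from if_pos hφ]
          rw [Finset.sum_congr rfl fun φ _ => show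
            s * φ.natDegree * (normalizedFactors f).count φ
              = s * ((normalizedFactors f).count φ * φ.natDegree) by ring]
          rw [← Finset.mul_sum, ← natDegree_eq_sum_count hf hm']
        · intro φ hφ
          simp only [Finsupp.onFinset_apply]
          rw [if_pos hφ]
          exact Dvd.intro _ rfl
      · -- left inverse
        intro ℓ hℓ
        obtain ⟨hmem, hdvd⟩ := Finset.mem_filter.mp hℓ
        obtain ⟨-, hsupp⟩ := mem_finsuppAntidiag.mp hmem
        ext φ
        simp only [Finsupp.onFinset_apply]
        rw [nf_prod_pow _ (fun ψ hψ => ⟨(hIfacts ψ hψ).1, (hIfacts ψ hψ).2.1⟩)]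
        by_cases hφI : φ ∈ Ifin (F := F) N
        · rw [if_pos hφI, count_sum_smul, if_pos hφI, Nat.mul_div_cancel' (hdvd φ hφI)]
        · rw [if_neg hφI]
          exact (Finsupp.notMem_support_iff.mp (fun hc => hφI (hsupp hc))).symm
      · -- right inverse
        intro f hf
        have hmon := (mem_Mfin.mp hf).1
        have htf : (normalizedFactors f).toFinset ⊆ Ifin (F := F) N := fun φ hφ =>
          mem_Ifin_of_factor hf hm' (Multiset.mem_toFinset.mp hφ)
        beta_reduce
        rw [Finset.prod_congr rfl (fun φ hφ => by
          rw [Finsupp.onFinset_apply, if_pos hφ,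
            Nat.mul_div_cancel_left _ (hdeg1 φ hφ)])]
        rw [← Finset.prod_subset htf (fun φ _ hnot => by
          rw [Multiset.count_eq_zero_of_notMem (fun hc => hnot (Multiset.mem_toFinset.mpr hc)),
            pow_zero])]
        rw [← Finset.prod_multiset_count]
        exact nf_prod_eq hmon
      · -- values agree
        intro ℓ hℓ
        obtain ⟨hmem, hdvd⟩ := Finset.mem_filter.mp hℓ
        beta_reduce
        rw [cpol_prod hζ hkey _ _ (fun φ hφ => ⟨(hIfacts φ hφ).1.pow _, by
          rw [pcoeff_zero_pow]
          exact pow_ne_zero _ (hIfacts φ hφ).2.2.1⟩)]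
        exact Finset.prod_congr rfl fun φ hφ =>
          (cpol_pow hζ hkey (hIfacts φ hφ).1 (hIfacts φ hφ).2.2.1 _).symm
    · rw [if_neg hsm]
      refine Finset.sum_eq_zero fun ℓ hℓ => absurd ?_ hsm
      obtain ⟨hmem, hdvd⟩ := Finset.mem_filter.mp hℓ
      obtain ⟨hsum, -⟩ := mem_finsuppAntidiag.mp hmem
      rw [← hsum]
      exact Finset.dvd_sum fun φ hφ =>
        dvd_trans (dvd_mul_right s φ.natDegree) (hdvd φ hφ)
  have hsplit : A * Zser (F := F) ζ ε s - 1
      = (A * G - 1) + A * (Zser (F := F) ζ ε s - G) := by ring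
  rw [hsplit]
  refine dvd_add hAG ?_
  rw [show Zser (F := F) ζ ε s - G = -(G - Zser (F := F) ζ ε s) by ring]
  exact (Dvd.dvd.mul_left hGZ.neg_right A)

end euler

section assemble

open Finset

local notation "X'" => (PowerSeries.X : PowerSeries ℂ)

lemma chi_sq (ζ : F) (ε : ℂ) (x : F) : chi ζ (ε^2) x = chi ζ ε x ^ 2 := by
  rw [chi, chi]
  split
  · simp
  · rw [← pow_mul, ← pow_mul']

lemma cpol_sq (ζ : F) (ε : ℂ) (f : Polynomial F) : cpol ζ (ε^2) f = cpol ζ ε f ^ 2 :=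
  chi_sq ζ ε _

lemma pair_prod (ζ : F) (ε : ℂ) (n : ℕ) :
    (∏ d ∈ Finset.Icc 1 n, ∏ p ∈ Sfin (F := F) d, (1 + C (cpol ζ ε p) * X'^d)) *
    (∏ d ∈ Finset.Icc 1 n, ∏ p ∈ Sfin (F := F) d, (1 - C (cpol ζ ε p) * X'^(1*d))) =
    ∏ d ∈ Finset.Icc 1 n, ∏ p ∈ Sfin (F := F) d, (1 - C (cpol ζ (ε^2) p) * X'^(2*d)) := by
  rw [← Finset.prod_mul_distrib]
  refine Finset.prod_congr rfl fun d _ => ?_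
  rw [← Finset.prod_mul_distrib]
  refine Finset.prod_congr rfl fun p _ => ?_
  rw [cpol_sq, one_mul, map_pow, mul_comm 2 d, pow_mul]
  ring

lemma Mfin_zero : Mfin (F := F) 0 = {1} := by
  ext p
  rw [mem_Mfin, Finset.mem_singleton]
  constructor
  · rintro ⟨h1, h2, h3⟩
    exact h1.natDegree_eq_zero.mp h2
  · rintro rfl
    exact ⟨Polynomial.monic_one, Polynomial.natDegree_one, by simp⟩

variable {ζ : F} {ε : ℂ} (hζ : ∀ x : F, x ≠ 0 → ∃ k : ℕ, ζ ^ k = x)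
  (hkey : ∀ a b : ℕ, ζ ^ a = ζ ^ b → ε ^ a = ε ^ b)

include hζ hkey in
lemma Zser_eq_one (hζ0 : ζ ≠ 0) (hε1 : ε ≠ 1) {s : ℕ} (hs : 1 ≤ s) :
    Zser (F := F) ζ ε s = 1 := by
  ext j
  rw [Zser, PowerSeries.coeff_mk]
  rcases eq_or_ne j 0 with rfl | hj
  · rw [if_pos (dvd_zero s), Nat.zero_div, Mfin_zero, Finset.sum_singleton,
      cpol_one hζ hkey]
    simp
  · rw [PowerSeries.coeff_one, if_neg hj]
    split
    · rename_i hdvd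
      have hpos : 1 ≤ j / s :=
        Nat.div_pos (Nat.le_of_dvd (Nat.pos_of_ne_zero hj) hdvd) hs
      rw [sum_cpol_eq hζ hkey hζ0 hpos, chi_sum_zero hζ hkey hζ0 hε1]
      ring
    · rfl

include hζ in
lemma W_mul_Z (hζ0 : ζ ≠ 0) :
    (1 - C ((Fintype.card F : ℂ)) * X'^2) * Zser (F := F) ζ 1 2 = 1 - X'^2 := by
  have hkey1 : ∀ a b : ℕ, ζ ^ a = ζ ^ b → (1:ℂ) ^ a = (1:ℂ) ^ b := fun a b _ => by
    rw [one_pow, one_pow]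
  have hchin : chi ζ (1:ℂ) (-1 : F) = 1 := by
    rw [chi, if_neg (neg_ne_zero.mpr one_ne_zero), one_pow]
  set q : ℂ := (Fintype.card F : ℂ) with hqdef
  have hz : ∀ j : ℕ, coeff j (Zser (F := F) ζ 1 2)
      = if 2 ∣ j then (if j = 0 then 1 else q^(j/2 - 1) * (q - 1)) else 0 := by
    intro j
    rw [Zser, PowerSeries.coeff_mk]
    by_cases h2 : 2 ∣ j
    · rw [if_pos h2, if_pos h2]
      rcases eq_or_ne j 0 with rfl | hj
      · rw [if_pos rfl, Nat.zero_div, Mfin_zero, Finset.sum_singleton, cpol_one hζ hkey1]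
      · have hpos : 1 ≤ j / 2 :=
          Nat.div_pos (Nat.le_of_dvd (Nat.pos_of_ne_zero hj) h2) (by norm_num)
        rw [if_neg hj, sum_cpol_eq hζ hkey1 hζ0 hpos, chi_sum_one hζ0, hchin, one_pow]
        ring
    · rw [if_neg h2, if_neg h2]
  ext k
  rw [sub_mul, one_mul, map_sub, map_sub, PowerSeries.coeff_one, PowerSeries.coeff_X_pow,
    show (C q * X'^2) * Zser (F := F) ζ 1 2 = (C q * Zser (F := F) ζ 1 2) * X'^2 by ring,
    PowerSeries.coeff_mul_X_pow', hz]
  by_cases h2 : 2 ∣ k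
  · rcases eq_or_ne k 0 with rfl | hk0
    · norm_num
    · have hk2 : 2 ≤ k := Nat.le_of_dvd (Nat.pos_of_ne_zero hk0) h2
      rw [if_pos h2, if_neg hk0, if_pos hk2, PowerSeries.coeff_C_mul, hz,
        if_pos (Nat.dvd_sub h2 (dvd_refl 2))]
      rcases eq_or_ne k 2 with rfl | hk2'
      · norm_num
      · rw [if_neg (show k - 2 ≠ 0 by omega), if_neg hk0, if_neg hk2',
          show k / 2 - 1 = ((k-2)/2 - 1) + 1 by omega, pow_succ]
        ring
  · rw [if_neg h2, if_neg (show k ≠ 0 by rintro rfl; exact h2 (dvd_zero 2)),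
      if_neg (show k ≠ 2 by rintro rfl; exact h2 ⟨1, rfl⟩)]
    split
    · rename_i hk2
      rw [PowerSeries.coeff_C_mul, hz, if_neg (show ¬ (2 ∣ (k - 2)) by omega)]
      ring
    · ring

end assemble

end BritnellAux

open BritnellAux

/-- Britnell's identity: with `ζ` a generator of `F_q^*`, `r φ ∈ ℤ/(q-1)` defined by
`ζ^{r φ} = (-1)^{deg φ} φ(0)`, and `ω ≠ 1` a `(q-1)`-st root of unity in `ℂ`,
the product `∏_φ (1 + ω^{r φ} u^{deg φ})` over monic irreducible polynomials `φ`
with `φ(0) ≠ 0` equals `1` if `ω ≠ -1` and `(1-qu²)/(1-u²)` if `ω = -1`.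
The identity is stated coefficientwise, truncating the product at degrees `≤ n`. -/
theorem britnell_identity (q : ℕ) (F : Type*) [Field F] [Fintype F]
    (hq : Fintype.card F = q)
    (ζ : F) (hζ : ∀ x : F, x ≠ 0 → ∃ k : ℕ, ζ ^ k = x)
    (r : Polynomial F → ZMod (q - 1))
    (hr : ∀ p : Polynomial F, p.Monic → Irreducible p → p.coeff 0 ≠ 0 →
      ζ ^ (r p).val = (-1) ^ p.natDegree * p.coeff 0)
    (ω : ℂ) (hω : ω ^ (q - 1) = 1) (hω1 : ω ≠ 1) (n : ℕ) :
    if ω = -1 then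
      (PowerSeries.coeff (R := ℂ) n)
        ((∏ d ∈ Finset.Icc 1 n,
          ∏ᶠ p ∈ {p : Polynomial F | p.Monic ∧ Irreducible p ∧ p.natDegree = d ∧ p.coeff 0 ≠ 0},
            (1 + PowerSeries.C (R := ℂ) (ω ^ (r p).val) * (X : PowerSeries ℂ) ^ d)) *
          (1 - X ^ 2)) =
      (PowerSeries.coeff (R := ℂ) n) (1 - PowerSeries.C (R := ℂ) (q : ℂ) * X ^ 2)
    else
      (PowerSeries.coeff (R := ℂ) n)
        (∏ d ∈ Finset.Icc 1 n,
          ∏ᶠ p ∈ {p : Polynomial F | p.Monic ∧ Irreducible p ∧ p.natDegree = d ∧ p.coeff 0 ≠ 0},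
            (1 + PowerSeries.C (R := ℂ) (ω ^ (r p).val) * (X : PowerSeries ℂ) ^ d)) =
      (PowerSeries.coeff (R := ℂ) n) 1 := by
  classical
  subst hq
  have hq2 : 2 ≤ Fintype.card F := Fintype.one_lt_card
  have hq3 : 3 ≤ Fintype.card F := by
    by_contra h
    have h2 : Fintype.card F = 2 := by omega
    rw [h2] at hω
    norm_num at hω
    exact hω1 hω
  have hζ0 : ζ ≠ 0 := by
    obtain ⟨v, hv⟩ := Fintype.exists_ne_of_one_lt_card
      (by rw [Fintype.card_units]; omega) (1 : Fˣ)
    intro h0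
    obtain ⟨k, hk⟩ := hζ v (Units.ne_zero v)
    rcases Nat.eq_zero_or_pos k with rfl | hk0
    · rw [pow_zero] at hk
      exact hv (Units.ext hk.symm)
    · rw [h0, zero_pow (Nat.pos_iff_ne_zero.mp hk0)] at hk
      exact (Units.ne_zero v) hk.symm
  set u : Fˣ := Units.mk0 ζ hζ0 with hu
  have huval : ∀ k : ℕ, ((u ^ k : Fˣ) : F) = ζ ^ k := by
    intro k
    rw [Units.val_pow_eq_pow_val, hu, Units.val_mk0]
  have horder : orderOf u = Fintype.card F - 1 := by
    have hall : ∀ x : Fˣ, x ∈ Subgroup.zpowers u := by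
      intro x
      obtain ⟨k, hk⟩ := hζ x.val (Units.ne_zero x)
      exact ⟨(k : ℤ), show u ^ (k : ℤ) = x by
        rw [zpow_natCast]; exact Units.ext (by rw [huval k, hk])⟩
    have h := orderOf_eq_card_of_forall_mem_zpowers hall
    rwa [Nat.card_eq_fintype_card, Fintype.card_units] at h
  have hmod : ∀ a b : ℕ, ζ ^ a = ζ ^ b →
      a % (Fintype.card F - 1) = b % (Fintype.card F - 1) := by
    intro a b hab
    have h1 : u ^ a = u ^ b := Units.ext (by rw [huval, huval]; exact hab)
    have h2 := pow_eq_pow_iff_modEq.mp h1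
    rwa [horder] at h2
  have transfer : ∀ (ε : ℂ), ε ^ (Fintype.card F - 1) = 1 →
      ∀ a b : ℕ, ζ ^ a = ζ ^ b → ε ^ a = ε ^ b := by
    intro ε hε a b hab
    have key : ∀ c : ℕ, ε ^ c = ε ^ (c % (Fintype.card F - 1)) := by
      intro c
      conv_lhs => rw [← Nat.div_add_mod c (Fintype.card F - 1)]
      rw [pow_add, pow_mul, hε, one_pow, one_mul]
    rw [key a, key b, hmod a b hab]
  have hkeyω := transfer ω hω
  have hfin : ∀ d : ℕ,
      (∏ᶠ p ∈ {p : Polynomial F | p.Monic ∧ Irreducible p ∧ p.natDegree = d ∧ p.coeff 0 ≠ 0},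
        (1 + PowerSeries.C (ω ^ (r p).val) * (X : PowerSeries ℂ) ^ d))
      = ∏ p ∈ Sfin (F := F) d,
        (1 + PowerSeries.C (cpol ζ ω p) * (X : PowerSeries ℂ) ^ d) := by
    intro d
    rw [← coe_Sfin, finprod_mem_coe_finset]
    refine Finset.prod_congr rfl fun p hp => ?_
    obtain ⟨h1, h2, h3, h4⟩ := mem_Sfin.mp hp
    have harg : (-1:F) ^ p.natDegree * p.coeff 0 ≠ 0 :=
      mul_ne_zero (pow_ne_zero _ (neg_ne_zero.mpr one_ne_zero)) h4
    have hcp : cpol ζ ω p = ω ^ (r p).val := by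
      rw [cpol, chi, if_neg harg]
      exact (hkeyω _ _ ((hr p h1 h2 h4).trans (dl_spec (hζ _ harg)).symm)).symm
    rw [hcp]
  have hA := euler hζ hkeyω 1 n le_rfl
  rw [Zser_eq_one hζ hkeyω hζ0 hω1 le_rfl, mul_one] at hA
  have hpair := pair_prod (F := F) ζ ω n
  by_cases hcase : ω = -1
  · rw [if_pos hcase, Finset.prod_congr rfl fun d _ => hfin d]
    have hsq : ω ^ 2 = 1 := by rw [hcase]; norm_num
    rw [hsq] at hpair
    have hkey1 : ∀ a b : ℕ, ζ ^ a = ζ ^ b → (1:ℂ) ^ a = (1:ℂ) ^ b := fun a b _ => by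
      rw [one_pow, one_pow]
    have hQZ := euler hζ hkey1 2 n one_le_two
    have hWZ := W_mul_Z hζ hζ0
    have hdvd : (X : PowerSeries ℂ) ^ (n+1) ∣
        (∏ d ∈ Finset.Icc 1 n, ∏ p ∈ Sfin (F := F) d,
          (1 + PowerSeries.C (cpol ζ ω p) * (X : PowerSeries ℂ) ^ d)) * (1 - X ^ 2)
          - (1 - PowerSeries.C ((Fintype.card F : ℕ) : ℂ) * X ^ 2) := by
      rw [show (∏ d ∈ Finset.Icc 1 n, ∏ p ∈ Sfin (F := F) d,
          (1 + PowerSeries.C (cpol ζ ω p) * (X : PowerSeries ℂ) ^ d)) * (1 - X ^ 2)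
          - (1 - PowerSeries.C ((Fintype.card F : ℕ) : ℂ) * X ^ 2)
        = (1 - PowerSeries.C ((Fintype.card F : ℕ) : ℂ) * X ^ 2) *
            (((∏ d ∈ Finset.Icc 1 n, ∏ p ∈ Sfin (F := F) d,
              (1 + PowerSeries.C (cpol ζ ω p) * (X : PowerSeries ℂ) ^ d)) *
              Zser (F := F) ζ 1 2) *
              (1 - (∏ d ∈ Finset.Icc 1 n, ∏ p ∈ Sfin (F := F) d,
                (1 - PowerSeries.C (cpol ζ ω p) * (X : PowerSeries ℂ) ^ (1*d))))
            + ((∏ d ∈ Finset.Icc 1 n, ∏ p ∈ Sfin (F := F) d,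
                (1 - PowerSeries.C (cpol ζ (1:ℂ) p) * (X : PowerSeries ℂ) ^ (2*d))) *
                Zser (F := F) ζ 1 2 - 1))
        from by rw [← hWZ, ← hpair]; ring]
      refine Dvd.dvd.mul_left (dvd_add ?_ hQZ) _
      refine Dvd.dvd.mul_left ?_ _
      rw [show (1 - (∏ d ∈ Finset.Icc 1 n, ∏ p ∈ Sfin (F := F) d,
          (1 - PowerSeries.C (cpol ζ ω p) * (X : PowerSeries ℂ) ^ (1*d))))
        = -((∏ d ∈ Finset.Icc 1 n, ∏ p ∈ Sfin (F := F) d,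
          (1 - PowerSeries.C (cpol ζ ω p) * (X : PowerSeries ℂ) ^ (1*d))) - 1) by ring]
      exact hA.neg_right
    exact coeff_eq_of_dvd hdvd (Nat.lt_succ_self n)
  · rw [if_neg hcase, Finset.prod_congr rfl fun d _ => hfin d]
    have hω2q : (ω ^ 2) ^ (Fintype.card F - 1) = 1 := by
      rw [← pow_mul, mul_comm, pow_mul, hω, one_pow]
    have hkeyω2 := transfer (ω ^ 2) hω2q
    have hω2ne : ω ^ 2 ≠ 1 := by
      intro h
      rcases mul_self_eq_one_iff.mp (show ω * ω = 1 by rw [← pow_two]; exact h) with h1 | h1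
      exacts [hω1 h1, hcase h1]
    have hQ := euler hζ hkeyω2 2 n one_le_two
    rw [Zser_eq_one hζ hkeyω2 hζ0 hω2ne one_le_two, mul_one] at hQ
    have hdvd : (X : PowerSeries ℂ) ^ (n+1) ∣
        (∏ d ∈ Finset.Icc 1 n, ∏ p ∈ Sfin (F := F) d,
          (1 + PowerSeries.C (cpol ζ ω p) * (X : PowerSeries ℂ) ^ d)) - 1 := by
      rw [show (∏ d ∈ Finset.Icc 1 n, ∏ p ∈ Sfin (F := F) d,
          (1 + PowerSeries.C (cpol ζ ω p) * (X : PowerSeries ℂ) ^ d)) - 1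
        = ((∏ d ∈ Finset.Icc 1 n, ∏ p ∈ Sfin (F := F) d,
            (1 + PowerSeries.C (cpol ζ ω p) * (X : PowerSeries ℂ) ^ d)) *
            (∏ d ∈ Finset.Icc 1 n, ∏ p ∈ Sfin (F := F) d,
              (1 - PowerSeries.C (cpol ζ ω p) * (X : PowerSeries ℂ) ^ (1*d))) - 1)
          - (∏ d ∈ Finset.Icc 1 n, ∏ p ∈ Sfin (F := F) d,
            (1 + PowerSeries.C (cpol ζ ω p) * (X : PowerSeries ℂ) ^ d)) *
            ((∏ d ∈ Finset.Icc 1 n, ∏ p ∈ Sfin (F := F) d,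
              (1 - PowerSeries.C (cpol ζ ω p) * (X : PowerSeries ℂ) ^ (1*d))) - 1)
        from by ring]
      rw [hpair]
      exact dvd_sub hQ (Dvd.dvd.mul_left hA _)
    exact coeff_eq_of_dvd hdvd (Nat.lt_succ_self n)
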